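/- For every even integer n ≥ 6, there exists an integer cyclically (2,3)-diagonal relative Heffter array H_6(n;6) (the case t = k = 6, with support [1, 6n+2] \ {2n+1, 4n+2}). -/

import Mathlib

/-- Number of filled cells in row `i` of the partially filled array `A`. -/
def rowFilled {m n : ℕ} (A : Fin m → Fin n → Option ℤ) (i : Fin m) : ℕ :=
  (Finset.univ.filter fun j => (A i j).isSome).card

/-- Number of filled cells in column `j` of the partially filled array `A`. -/
def colFilled {m n : ℕ} (A : Fin m → Fin n → Option ℤ) (j : Fin n) : ℕ :=
  (Finset.univ.filter fun i => (A i j).isSome).card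

/-- Sum of the entries of row `i` (empty cells count as `0`). -/
def rowSum {m n : ℕ} (A : Fin m → Fin n → Option ℤ) (i : Fin m) : ℤ :=
  ∑ j, (A i j).getD 0

/-- Sum of the entries of column `j` (empty cells count as `0`). -/
def colSum {m n : ℕ} (A : Fin m → Fin n → Option ℤ) (j : Fin n) : ℤ :=
  ∑ i, (A i j).getD 0

/-- `A` is a square integer relative Heffter array `H_t(n;k)`, written with
integer entries: each row and each column has exactly `k` filled cells, each
row and column sums to `0` in `ℤ`, every entry `x` satisfies
`1 ≤ |x| ≤ ⌊(2nk+t)/2⌋` with `|x|` not a multiple of `(2nk+t)/t` (i.e. the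
class of `x` avoids the subgroup `J` of order `t`), and for every admissible
absolute value exactly one cell contains it (up to sign), so that every class
of `ZMod (2nk+t) \ J` is represented exactly once up to sign. -/
def IsIntHeffter (n k t : ℕ) (A : Fin n → Fin n → Option ℤ) : Prop :=
  (∀ i, rowFilled A i = k) ∧
  (∀ j, colFilled A j = k) ∧
  (∀ i, rowSum A i = 0) ∧
  (∀ j, colSum A j = 0) ∧
  (∀ i j x, A i j = some x →
    1 ≤ x.natAbs ∧ x.natAbs ≤ (2 * n * k + t) / 2 ∧
      ¬ ((2 * n * k + t) / t ∣ x.natAbs)) ∧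
  (∀ x : ℕ, 1 ≤ x → x ≤ (2 * n * k + t) / 2 → ¬ ((2 * n * k + t) / t ∣ x) →
    ∃! p : Fin n × Fin n, A p.1 p.2 = some (x : ℤ) ∨ A p.1 p.2 = some (-(x : ℤ)))

/-- A square partially filled integer array is shiftable if every row and every
column contains as many positive entries as negative entries. -/
def Shiftable {n : ℕ} (A : Fin n → Fin n → Option ℤ) : Prop :=
  (∀ i : Fin n, (Finset.univ.filter fun j => 0 < (A i j).getD 0).card =
      (Finset.univ.filter fun j => (A i j).getD 0 < 0).card) ∧
  (∀ j : Fin n, (Finset.univ.filter fun i => 0 < (A i j).getD 0).card =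
      (Finset.univ.filter fun i => (A i j).getD 0 < 0).card)

/-- `A` is cyclically `k`-diagonal: its filled cells are exactly those of `k`
consecutive cyclic diagonals (cell `(r,c)` lies on diagonal `r - c (mod n)`). -/
def CycDiagonal {n : ℕ} (k : ℕ) (A : Fin n → Fin n → Option ℤ) : Prop :=
  ∃ d : ZMod n, ∀ r c : Fin n, (A r c).isSome ↔
    ∃ j : ℕ, j < k ∧ ((r : ℕ) : ZMod n) - ((c : ℕ) : ZMod n) = d + (j : ZMod n)

/-- `A` (of size `N` with `s ∣ N`) is cyclically `(s,k)`-diagonal: it is obtained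
from a cyclically `k`-diagonal `(N/s) × (N/s)` array by blowing up each cell into
an `s × s` block and then cyclically shifting the columns by some offset. -/
def CycSKDiagonal (s k : ℕ) {N : ℕ} (A : Fin N → Fin N → Option ℤ) : Prop :=
  s ∣ N ∧ ∃ (d : ZMod (N / s)) (off : ℕ), ∀ r c : Fin N, (A r c).isSome ↔
    ∃ j : ℕ, j < k ∧
      (((r : ℕ) / s : ℕ) : ZMod (N / s)) - (((((c : ℕ) + off) % N) / s : ℕ) : ZMod (N / s))
        = d + (j : ZMod (N / s))

/-- The support of a partially filled integer array: the set of absolute values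
of its entries. -/
def suppSet {m n : ℕ} (A : Fin m → Fin n → Option ℤ) : Set ℕ :=
  {a | ∃ i j x, A i j = some x ∧ x.natAbs = a}

/-- The entries of `A` have pairwise distinct absolute values. -/
def DistinctAbs {m n : ℕ} (A : Fin m → Fin n → Option ℤ) : Prop :=
  ∀ i j i' j' x y, A i j = some x → A i' j' = some y →
    x.natAbs = y.natAbs → (i, j) = (i', j')

/-- The skeleton of a partially filled array: the set of its filled positions. -/
def skel {m n : ℕ} (A : Fin m → Fin n → Option ℤ) : Set (Fin m × Fin n) :=
  {p | (A p.1 p.2).isSome}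

/-- diagonal index of block cell (r,c): (r - c) mod m -/
def dval (m r c : ℕ) : ℕ := (r + m - c) % m

/-- entry value table: j = diagonal (0..2), ρ = row parity, γ = col parity, r = block row -/
def hval (m j ρ γ r : ℕ) : ℤ :=
  if j = 0 then
    if ρ = 0 then (if γ = 0 then (r : ℤ) + 1 else (m : ℤ) + 1 + r)
    else (if γ = 0 then 3 * (m : ℤ) - r else 4 * (m : ℤ) - r)
  else if j = 1 then
    if ρ = 0 then (if γ = 0 then -(4 * (m : ℤ) + 2 + r) else 6 * (m : ℤ) + 2 + r)
    else (if γ = 0 then 7 * (m : ℤ) + 2 + r else 9 * (m : ℤ) + 2 - r)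
  else
    if ρ = 0 then (if γ = 0 then 6 * (m : ℤ) + 1 - r else -(9 * (m : ℤ) + 3 + r))
    else (if γ = 0 then -(12 * (m : ℤ) + 2 - r) else -(11 * (m : ℤ) + 2 - r))

def cellVal (m R C : ℕ) : Option ℤ :=
  if dval m (R / 2) (C / 2) < 3 then
    some (hval m (dval m (R / 2) (C / 2)) (R % 2) (C % 2) (R / 2))
  else none

def Arr (m : ℕ) : Fin (2 * m) → Fin (2 * m) → Option ℤ := fun R C => cellVal m R.val C.val

lemma dval_lt {m : ℕ} (hm : 0 < m) (r c : ℕ) : dval m r c < m := Nat.mod_lt _ hm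

lemma dval_eq_of_le {m r c : ℕ} (h : c ≤ r) (hr : r < m) : dval m r c = r - c := by
  unfold dval
  rw [Nat.mod_eq_sub_mod (by omega), show r + m - c - m = r - c by omega,
    Nat.mod_eq_of_lt (by omega)]

lemma dval_eq_of_gt {m r c : ℕ} (h : r < c) (hc : c < m) : dval m r c = r + m - c := by
  unfold dval
  exact Nat.mod_eq_of_lt (by omega)

lemma dval_invol {m r c : ℕ} (hr : r < m) (hc : c < m) : dval m r (dval m r c) = c := by
  rcases le_or_gt c r with h | h
  · rw [dval_eq_of_le h hr, dval_eq_of_le (by omega) hr]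
    omega
  · rw [dval_eq_of_gt h hc, dval_eq_of_gt (by omega) (by omega)]
    omega

lemma dval_shift {m c : ℕ} (hc : c < m) {j : ℕ} (hj : j < m) :
    dval m ((c + j) % m) c = j := by
  rcases lt_or_ge (c + j) m with h | h
  · rw [Nat.mod_eq_of_lt h, dval_eq_of_le (by omega) h]
    omega
  · have h1 : (c + j) % m = c + j - m := by
      rw [Nat.mod_eq_sub_mod h, Nat.mod_eq_of_lt (by omega)]
    rw [h1]
    rcases le_or_gt c (c + j - m) with h2 | h2
    · rw [dval_eq_of_le h2 (by omega)]; omega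
    · rw [dval_eq_of_gt h2 hc]; omega

lemma dval_shift' {m r c : ℕ} (hr : r < m) (hc : c < m) :
    (c + dval m r c) % m = r := by
  rcases le_or_gt c r with h | h
  · rw [dval_eq_of_le h hr, show c + (r - c) = r by omega, Nat.mod_eq_of_lt hr]
  · rw [dval_eq_of_gt h hc, show c + (r + m - c) = m + r by omega, Nat.add_mod_left,
      Nat.mod_eq_of_lt hr]

section Sums
variable {M : Type*} [AddCommMonoid M]

lemma sum_fin_two (m : ℕ) (f : ℕ → M) :
    ∑ i : Fin (2 * m), f i.val = ∑ r ∈ Finset.range m, (f (2 * r) + f (2 * r + 1)) := by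
  rw [Fin.sum_univ_eq_sum_range]
  induction m with
  | zero => simp
  | succ k ih =>
    rw [show 2 * (k + 1) = (2 * k + 1) + 1 by ring, Finset.sum_range_succ,
      Finset.sum_range_succ, ih, Finset.sum_range_succ, add_assoc]

lemma sum_dval_left {m : ℕ} (hm : 0 < m) {r : ℕ} (hr : r < m) (g : ℕ → M) :
    ∑ c ∈ Finset.range m, g (dval m r c) = ∑ j ∈ Finset.range m, g j := by
  refine Finset.sum_nbij' (i := fun c => dval m r c) (j := fun j => dval m r j) ?_ ?_ ?_ ?_ ?_
  · intro a ha; exact Finset.mem_range.2 (dval_lt hm _ _)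
  · intro a ha; exact Finset.mem_range.2 (dval_lt hm _ _)
  · intro a ha; exact dval_invol hr (Finset.mem_range.1 ha)
  · intro a ha; exact dval_invol hr (Finset.mem_range.1 ha)
  · intro a ha; rfl

lemma sum_dval_right {m : ℕ} (hm : 0 < m) {c : ℕ} (hc : c < m) (g : ℕ → M) :
    ∑ r ∈ Finset.range m, g (dval m r c) = ∑ j ∈ Finset.range m, g j := by
  refine Finset.sum_nbij' (i := fun r => dval m r c) (j := fun j => (c + j) % m) ?_ ?_ ?_ ?_ ?_
  · intro a ha; exact Finset.mem_range.2 (dval_lt hm _ _)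
  · intro a ha; exact Finset.mem_range.2 (Nat.mod_lt _ hm)
  · intro a ha; exact dval_shift' (Finset.mem_range.1 ha) hc
  · intro a ha; exact dval_shift hc (Finset.mem_range.1 ha)
  · intro a ha; rfl

lemma sum_small3 {m : ℕ} (hm : 3 ≤ m) (g : ℕ → M) (hg : ∀ j, 3 ≤ j → g j = 0) :
    ∑ j ∈ Finset.range m, g j = ∑ j ∈ Finset.range 3, g j := by
  refine (Finset.sum_subset (Finset.range_subset_range.2 hm) ?_).symm
  intro x _ hx
  exact hg x (by simpa using hx)

lemma row_master {m : ℕ} (hm : 3 ≤ m) (R : ℕ) (hR : R < 2 * m)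
    (F : Option ℤ → M) (hF : F none = 0) :
    ∑ C : Fin (2 * m), F (cellVal m R C.val)
      = ∑ j ∈ Finset.range 3,
          (F (some (hval m j (R % 2) 0 (R / 2))) + F (some (hval m j (R % 2) 1 (R / 2)))) := by
  have hm0 : 0 < m := by omega
  have hrr : R / 2 < m := by omega
  rw [sum_fin_two m (fun C => F (cellVal m R C))]
  have step : ∀ c ∈ Finset.range m,
      F (cellVal m R (2 * c)) + F (cellVal m R (2 * c + 1))
        = (fun j => if j < 3 then
            F (some (hval m j (R % 2) 0 (R / 2))) + F (some (hval m j (R % 2) 1 (R / 2)))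
          else 0) (dval m (R / 2) c) := by
    intro c _
    have e1 : 2 * c / 2 = c := by omega
    have e2 : (2 * c + 1) / 2 = c := by omega
    have e3 : 2 * c % 2 = 0 := by omega
    have e4 : (2 * c + 1) % 2 = 1 := by omega
    by_cases hd : dval m (R / 2) c < 3
    · simp only [cellVal, e1, e2, e3, e4, if_pos hd]
    · simp only [cellVal, e1, e2, e3, e4, if_neg hd, hF, if_neg hd, add_zero]
  rw [Finset.sum_congr rfl step,
    sum_dval_left hm0 hrr (fun j => if j < 3 then
      F (some (hval m j (R % 2) 0 (R / 2))) + F (some (hval m j (R % 2) 1 (R / 2))) else 0),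
    sum_small3 hm _ (fun j hj => if_neg (by omega))]
  refine Finset.sum_congr rfl ?_
  intro j hj
  simp only [if_pos (Finset.mem_range.1 hj)]

lemma col_master {m : ℕ} (hm : 3 ≤ m) (C : ℕ) (hC : C < 2 * m)
    (F : Option ℤ → M) (hF : F none = 0) :
    ∑ R : Fin (2 * m), F (cellVal m R.val C)
      = ∑ j ∈ Finset.range 3,
          (F (some (hval m j 0 (C % 2) ((C / 2 + j) % m)))
            + F (some (hval m j 1 (C % 2) ((C / 2 + j) % m)))) := by
  have hm0 : 0 < m := by omega
  have hcc : C / 2 < m := by omega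
  rw [sum_fin_two m (fun R => F (cellVal m R C))]
  have step : ∀ r ∈ Finset.range m,
      F (cellVal m (2 * r) C) + F (cellVal m (2 * r + 1) C)
        = (fun j => if j < 3 then
            F (some (hval m j 0 (C % 2) ((C / 2 + j) % m)))
              + F (some (hval m j 1 (C % 2) ((C / 2 + j) % m)))
          else 0) (dval m r (C / 2)) := by
    intro r hr
    have hrm : r < m := Finset.mem_range.1 hr
    have e1 : 2 * r / 2 = r := by omega
    have e2 : (2 * r + 1) / 2 = r := by omega
    have e3 : 2 * r % 2 = 0 := by omega
    have e4 : (2 * r + 1) % 2 = 1 := by omega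
    by_cases hd : dval m r (C / 2) < 3
    · have hb : (C / 2 + dval m r (C / 2)) % m = r := dval_shift' hrm hcc
      simp only [cellVal, e1, e2, e3, e4, if_pos hd, hb]
    · simp only [cellVal, e1, e2, e3, e4, if_neg hd, hF, add_zero]
  rw [Finset.sum_congr rfl step,
    sum_dval_right hm0 hcc (fun j => if j < 3 then
      F (some (hval m j 0 (C % 2) ((C / 2 + j) % m)))
        + F (some (hval m j 1 (C % 2) ((C / 2 + j) % m))) else 0),
    sum_small3 hm _ (fun j hj => if_neg (by omega))]
  refine Finset.sum_congr rfl ?_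
  intro j hj
  simp only [if_pos (Finset.mem_range.1 hj)]

end Sums

lemma arr_rowFilled {m : ℕ} (hm : 3 ≤ m) (R : Fin (2 * m)) :
    rowFilled (Arr m) R = 6 := by
  unfold rowFilled Arr
  rw [Finset.card_filter]
  have h := row_master (M := ℕ) hm R.val R.isLt
    (fun o => if o.isSome = true then 1 else 0) rfl
  exact h.trans (by simp [Finset.sum_range_succ])

lemma arr_colFilled {m : ℕ} (hm : 3 ≤ m) (C : Fin (2 * m)) :
    colFilled (Arr m) C = 6 := by
  unfold colFilled Arr
  rw [Finset.card_filter]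
  have h := col_master (M := ℕ) hm C.val C.isLt
    (fun o => if o.isSome = true then 1 else 0) rfl
  exact h.trans (by simp [Finset.sum_range_succ])

lemma arr_rowSum {m : ℕ} (hm : 3 ≤ m) (R : Fin (2 * m)) :
    rowSum (Arr m) R = 0 := by
  unfold rowSum Arr
  have h := row_master (M := ℤ) hm R.val R.isLt (fun o => o.getD 0) rfl
  refine h.trans ?_
  have hρ : R.val % 2 = 0 ∨ R.val % 2 = 1 := by omega
  rcases hρ with h2 | h2 <;> rw [h2] <;>
    simp [Finset.sum_range_succ, hval] <;> ring

lemma arr_colSum {m : ℕ} (hm : 3 ≤ m) (C : Fin (2 * m)) :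
    colSum (Arr m) C = 0 := by
  unfold colSum Arr
  have h := col_master (M := ℤ) hm C.val C.isLt (fun o => o.getD 0) rfl
  refine h.trans ?_
  have hγ : C.val % 2 = 0 ∨ C.val % 2 = 1 := by omega
  rcases hγ with h2 | h2 <;> rw [h2] <;>
    simp [Finset.sum_range_succ, hval] <;> ring

lemma not_dvd_run {m v : ℕ} (h1 : 1 ≤ v) (h2 : v ≤ 12 * m + 2)
    (h3 : v ≠ 4 * m + 1) (h4 : v ≠ 8 * m + 2) : ¬ (4 * m + 1) ∣ v := by
  rintro ⟨c, rfl⟩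
  have hc : c = 0 ∨ c = 1 ∨ c = 2 ∨ 3 ≤ c := by omega
  rcases hc with rfl | rfl | rfl | hc3
  · omega
  · omega
  · omega
  · have hle : (4 * m + 1) * 3 ≤ (4 * m + 1) * c := Nat.mul_le_mul le_rfl hc3
    generalize hw : (4 * m + 1) * c = w at *
    omega

lemma hval_abs {m j ρ γ r : ℕ} (hm : 3 ≤ m) (hj : j < 3) (hρ : ρ < 2) (hγ : γ < 2)
    (hr : r < m) :
    1 ≤ (hval m j ρ γ r).natAbs ∧ (hval m j ρ γ r).natAbs ≤ 12 * m + 2 ∧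
      (hval m j ρ γ r).natAbs ≠ 4 * m + 1 ∧ (hval m j ρ γ r).natAbs ≠ 8 * m + 2 := by
  interval_cases j <;> interval_cases ρ <;> interval_cases γ <;> simp [hval] <;> omega

set_option maxHeartbeats 1000000 in
lemma hval_inj {m : ℕ} (hm : 3 ≤ m) {j ρ γ r j' ρ' γ' r' : ℕ}
    (hj : j < 3) (hρ : ρ < 2) (hγ : γ < 2) (hr : r < m)
    (hj' : j' < 3) (hρ' : ρ' < 2) (hγ' : γ' < 2) (hr' : r' < m)
    (h : (hval m j ρ γ r).natAbs = (hval m j' ρ' γ' r').natAbs) :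
    j = j' ∧ ρ = ρ' ∧ γ = γ' ∧ r = r' := by
  unfold hval at h
  split_ifs at h <;> omega

lemma cell_some {m R C : ℕ} (hd : dval m (R / 2) (C / 2) < 3) :
    cellVal m R C = some (hval m (dval m (R / 2) (C / 2)) (R % 2) (C % 2) (R / 2)) :=
  if_pos hd

lemma exu {m : ℕ} (hm : 3 ≤ m) (j ρ γ r : ℕ) (hj : j < 3) (hρ : ρ < 2) (hγ : γ < 2)
    (hr : r < m) (x : ℕ) (hx : (hval m j ρ γ r).natAbs = x) :
    ∃! p : Fin (2 * m) × Fin (2 * m),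
      Arr m p.1 p.2 = some (x : ℤ) ∨ Arr m p.1 p.2 = some (-(x : ℤ)) := by
  have hm0 : 0 < m := by omega
  have hjm : j < m := by omega
  set c := dval m r j with hc
  have hcm : c < m := dval_lt hm0 r j
  have hR0 : 2 * r + ρ < 2 * m := by omega
  have hC0 : 2 * c + γ < 2 * m := by omega
  have e1 : (2 * r + ρ) / 2 = r := by omega
  have e2 : (2 * r + ρ) % 2 = ρ := by omega
  have e3 : (2 * c + γ) / 2 = c := by omega
  have e4 : (2 * c + γ) % 2 = γ := by omega
  have e5 : dval m r c = j := dval_invol hr hjm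
  have hA : Arr m ⟨2 * r + ρ, hR0⟩ ⟨2 * c + γ, hC0⟩ = some (hval m j ρ γ r) := by
    show cellVal m (2 * r + ρ) (2 * c + γ) = _
    unfold cellVal
    rw [e1, e2, e3, e4, e5, if_pos hj]
  refine ⟨⟨⟨2 * r + ρ, hR0⟩, ⟨2 * c + γ, hC0⟩⟩, ?_, ?_⟩
  · rcases Int.natAbs_eq (hval m j ρ γ r) with he | he
    · left; rw [hA, he, hx]
    · right; rw [hA, he, hx]
  · rintro ⟨⟨R', hR'⟩, ⟨C', hC'⟩⟩ hq
    have hAq : Arr m (⟨R', hR'⟩ : Fin (2 * m)) ⟨C', hC'⟩ = cellVal m R' C' := rfl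
    rw [hAq] at hq
    have hd : dval m (R' / 2) (C' / 2) < 3 := by
      by_contra hd
      unfold cellVal at hq
      rw [if_neg hd] at hq
      rcases hq with h | h <;> exact nomatch h
    rw [cell_some hd] at hq
    have habs : (hval m (dval m (R' / 2) (C' / 2)) (R' % 2) (C' % 2) (R' / 2)).natAbs = x := by
      rcases hq with h | h <;> (injection h with h'; rw [h']) <;> simp
    have hR2 : R' / 2 < m := by omega
    have hC2 : C' / 2 < m := by omega
    obtain ⟨ej, eρ, eγ, er⟩ := hval_inj hm hd (by omega) (by omega) hR2 hj hρ hγ hr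
      (habs.trans hx.symm)
    have hdc : dval m r (C' / 2) = j := by rw [← er]; exact ej
    have hcc' : C' / 2 = c := by
      rw [hc, ← hdc]
      have := dval_invol (hr := er ▸ hR2) hC2
      exact this.symm
    refine Prod.ext (Fin.ext ?_) (Fin.ext ?_) <;> simp <;> omega

lemma dval_cast (m rr cc : ℕ) (hcc : cc < m) :
    ((dval m rr cc : ℕ) : ZMod m) = (rr : ZMod m) - (cc : ZMod m) := by
  unfold dval
  rw [ZMod.natCast_mod, Nat.cast_sub (by omega : cc ≤ rr + m), Nat.cast_add,
    ZMod.natCast_self]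
  ring

lemma arr_cyc {m : ℕ} (hm : 3 ≤ m) : CycSKDiagonal 2 3 (Arr m) := by
  refine ⟨⟨m, rfl⟩, ?_⟩
  have h2 : 2 * m / 2 = m := by omega
  rw [h2]
  refine ⟨0, 0, ?_⟩
  intro R C
  have e0 : ((C : ℕ) + 0) % (2 * m) = (C : ℕ) := by
    rw [Nat.add_zero, Nat.mod_eq_of_lt C.isLt]
  rw [e0]
  have hC2 : (C : ℕ) / 2 < m := by have := C.isLt; omega
  have hdlt : dval m ((R : ℕ) / 2) ((C : ℕ) / 2) < m := dval_lt (by omega) _ _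
  constructor
  · intro hs
    have hd : dval m ((R : ℕ) / 2) ((C : ℕ) / 2) < 3 := by
      by_contra hd
      have : Arr m R C = none := if_neg hd
      rw [this] at hs
      simp at hs
    refine ⟨dval m ((R : ℕ) / 2) ((C : ℕ) / 2), hd, ?_⟩
    rw [zero_add]
    exact (dval_cast m _ _ hC2).symm
  · rintro ⟨j, hj3, hj⟩
    rw [zero_add] at hj
    have hcast : ((dval m ((R : ℕ) / 2) ((C : ℕ) / 2) : ℕ) : ZMod m) = ((j : ℕ) : ZMod m) := by
      rw [dval_cast m _ _ hC2, hj]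
    have hmod := (ZMod.natCast_eq_natCast_iff _ _ _).mp hcast
    have hdj : dval m ((R : ℕ) / 2) ((C : ℕ) / 2) = j := by
      have h' := hmod
      unfold Nat.ModEq at h'
      rwa [Nat.mod_eq_of_lt hdlt, Nat.mod_eq_of_lt (by omega)] at h'
    have hd3 : dval m ((R : ℕ) / 2) ((C : ℕ) / 2) < 3 := by omega
    show (cellVal m (R : ℕ) (C : ℕ)).isSome = true
    rw [cell_some hd3]
    rfl

lemma arr_heffter {m : ℕ} (hm : 3 ≤ m) : IsIntHeffter (2 * m) 6 6 (Arr m) := by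
  refine ⟨fun i => arr_rowFilled hm i, fun j => arr_colFilled hm j,
    fun i => arr_rowSum hm i, fun j => arr_colSum hm j, ?_, ?_⟩
  · intro i j x h
    have hd : dval m ((i : ℕ) / 2) ((j : ℕ) / 2) < 3 := by
      by_contra hd
      have : Arr m i j = none := if_neg hd
      rw [this] at h
      exact nomatch h
    have hA : Arr m i j = some (hval m (dval m ((i : ℕ) / 2) ((j : ℕ) / 2))
        ((i : ℕ) % 2) ((j : ℕ) % 2) ((i : ℕ) / 2)) := cell_some hd
    rw [hA] at h
    injection h with h'
    have hi2 : (i : ℕ) / 2 < m := by have := i.isLt; omega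
    have hb := hval_abs (ρ := (i : ℕ) % 2) (γ := (j : ℕ) % 2) hm hd (by omega) (by omega) hi2
    rw [h'] at hb
    refine ⟨hb.1, ?_, ?_⟩
    · have e : (2 * (2 * m) * 6 + 6) / 2 = 12 * m + 3 := by omega
      rw [e]; omega
    · have e : (2 * (2 * m) * 6 + 6) / 6 = 4 * m + 1 := by omega
      rw [e]; exact not_dvd_run hb.1 hb.2.1 hb.2.2.1 hb.2.2.2
  · intro x hx1 hx2 hx3
    rw [show (2 * (2 * m) * 6 + 6) / 2 = 12 * m + 3 by omega] at hx2
    rw [show (2 * (2 * m) * 6 + 6) / 6 = 4 * m + 1 by omega] at hx3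
    have hne1 : x ≠ 4 * m + 1 := fun h => hx3 (h ▸ dvd_refl _)
    have hne2 : x ≠ 8 * m + 2 := fun h => hx3 (h ▸ ⟨2, by ring⟩)
    have hne3 : x ≠ 12 * m + 3 := fun h => hx3 (h ▸ ⟨3, by ring⟩)
    have hcase : (1 ≤ x ∧ x ≤ m) ∨ (m + 1 ≤ x ∧ x ≤ 2 * m) ∨
        (2 * m + 1 ≤ x ∧ x ≤ 3 * m) ∨ (3 * m + 1 ≤ x ∧ x ≤ 4 * m) ∨
        (4 * m + 2 ≤ x ∧ x ≤ 5 * m + 1) ∨ (5 * m + 2 ≤ x ∧ x ≤ 6 * m + 1) ∨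
        (6 * m + 2 ≤ x ∧ x ≤ 7 * m + 1) ∨ (7 * m + 2 ≤ x ∧ x ≤ 8 * m + 1) ∨
        (8 * m + 3 ≤ x ∧ x ≤ 9 * m + 2) ∨ (9 * m + 3 ≤ x ∧ x ≤ 10 * m + 2) ∨
        (10 * m + 3 ≤ x ∧ x ≤ 11 * m + 2) ∨ (11 * m + 3 ≤ x ∧ x ≤ 12 * m + 2) := by
      omega
    rcases hcase with h | h | h | h | h | h | h | h | h | h | h | h
    · exact exu hm 0 0 0 (x - 1) (by omega) (by omega) (by omega) (by omega) x
        (by simp [hval]; omega)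
    · exact exu hm 0 0 1 (x - m - 1) (by omega) (by omega) (by omega) (by omega) x
        (by simp [hval]; omega)
    · exact exu hm 0 1 0 (3 * m - x) (by omega) (by omega) (by omega) (by omega) x
        (by simp [hval]; omega)
    · exact exu hm 0 1 1 (4 * m - x) (by omega) (by omega) (by omega) (by omega) x
        (by simp [hval]; omega)
    · exact exu hm 1 0 0 (x - 4 * m - 2) (by omega) (by omega) (by omega) (by omega) x
        (by simp [hval]; omega)
    · exact exu hm 2 0 0 (6 * m + 1 - x) (by omega) (by omega) (by omega) (by omega) x
        (by simp [hval]; omega)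
    · exact exu hm 1 0 1 (x - 6 * m - 2) (by omega) (by omega) (by omega) (by omega) x
        (by simp [hval]; omega)
    · exact exu hm 1 1 0 (x - 7 * m - 2) (by omega) (by omega) (by omega) (by omega) x
        (by simp [hval]; omega)
    · exact exu hm 1 1 1 (9 * m + 2 - x) (by omega) (by omega) (by omega) (by omega) x
        (by simp [hval]; omega)
    · exact exu hm 2 0 1 (x - 9 * m - 3) (by omega) (by omega) (by omega) (by omega) x
        (by simp [hval]; omega)
    · exact exu hm 2 1 1 (11 * m + 2 - x) (by omega) (by omega) (by omega) (by omega) x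
        (by simp [hval]; omega)
    · exact exu hm 2 1 0 (12 * m + 2 - x) (by omega) (by omega) (by omega) (by omega) x
        (by simp [hval]; omega)


/-- for every even `n ≥ 6`, there exists an integer cyclically
`(2,3)`-diagonal `H_6(n;6)`. -/
theorem intHeffter_H6_cyc23diag (n : ℕ) (hn : 6 ≤ n) (hne : Even n) :
    ∃ A : Fin n → Fin n → Option ℤ,
      IsIntHeffter n 6 6 A ∧ CycSKDiagonal 2 3 A := by
  obtain ⟨m, hm⟩ := hne
  obtain rfl : n = 2 * m := by omega
  exact ⟨Arr m, arr_heffter (by omega), arr_cyc (by omega)⟩
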